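/- arXiv:math/0106105 — 5 statements merged into one kernel-verified Lean document; each statement's English description precedes it below -/
import Mathlib

section
/- Let G be a topological group and N a closed normal subgroup. If both N (with the subspace topology) and G/N (with the quotient topology) are topologically Archimedean, then G is topologically Archimedean. -/
/-- A topological group is topologically Archimedean (TA) if it has no proper
open subgroup. -/
def IsTA (G : Type*) [Group G] [TopologicalSpace G] : Prop :=
  ∀ H : Subgroup G, IsOpen (H : Set G) → H = ⊤

theorem TA_extension (G : Type*) [Group G] [TopologicalSpace G]
    [IsTopologicalGroup G] (N : Subgroup G) [N.Normal] (hNc : IsClosed (N : Set G))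
    (hN : IsTA N) (hQ : IsTA (G ⧸ N)) : IsTA G := by
  intro H hH
  -- N ≤ H
  have h1 : H.subgroupOf N = ⊤ := by
    apply hN
    exact hH.preimage continuous_subtype_val
  have hNH : N ≤ H := by
    intro x hx
    have := h1 ▸ (Subgroup.mem_top (⟨x, hx⟩ : N))
    simpa [Subgroup.mem_subgroupOf] using this
  -- image in quotient is everything
  have h2 : H.map (QuotientGroup.mk' N) = ⊤ := by
    apply hQ
    exact QuotientGroup.isOpenMap_coe _ hH
  have h3 : H ⊔ N = ⊤ := by
    have := congrArg (Subgroup.comap (QuotientGroup.mk' N)) h2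
    rwa [Subgroup.comap_map_eq, QuotientGroup.ker_mk', Subgroup.comap_top] at this
  rw [sup_eq_left.mpr hNH] at h3
  exact h3
end

section
/- Let G be a topological group and N a closed normal subgroup. If both N (with the subspace topology) and G/N (with the quotient topology) are topologically non-Archimedean, then G is topologically non-Archimedean. -/
/-- A topological group is topologically non-Archimedean (TNA) if every
neighborhood of the identity contains an open subgroup. -/
def IsTNA (G : Type*) [Group G] [TopologicalSpace G] : Prop :=
  ∀ U ∈ nhds (1 : G), ∃ H : Subgroup G, IsOpen (H : Set G) ∧ (H : Set G) ⊆ U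

theorem TNA_extension (G : Type*) [Group G] [TopologicalSpace G]
    [IsTopologicalGroup G] (N : Subgroup G) [N.Normal] (hNc : IsClosed (N : Set G))
    (hN : IsTNA N) (hQ : IsTNA (G ⧸ N)) : IsTNA G := by
  intro U hU
  -- Step 1: U₁ * U₁ ⊆ U
  obtain ⟨U₁, hU₁o, hU₁1, hU₁U⟩ := exists_open_nhds_one_mul_subset hU
  -- Step 2: open subgroup K of N inside U₁
  have hpre : (Subtype.val ⁻¹' U₁ : Set N) ∈ nhds (1 : N) :=
    continuous_subtype_val.continuousAt.preimage_mem_nhds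
      (by simpa using hU₁o.mem_nhds hU₁1)
  obtain ⟨K, hKo, hKU⟩ := hN _ hpre
  obtain ⟨O', hO'o, hO'K⟩ := isOpen_induced_iff.mp hKo
  set A₀ : Subgroup G := K.map N.subtype with hA₀def
  have hA₀U₁ : (A₀ : Set G) ⊆ U₁ := by
    rintro _ ⟨k, hk, rfl⟩
    exact hKU hk
  have h1O' : (1 : G) ∈ O' := by
    have h : (1 : N) ∈ Subtype.val ⁻¹' O' := by rw [hO'K]; exact K.one_mem
    simpa using h
  have hNO' : ∀ g : G, g ∈ N → g ∈ O' → g ∈ A₀ := by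
    intro g hgN hgO'
    have h : (⟨g, hgN⟩ : N) ∈ K := by
      have : (⟨g, hgN⟩ : N) ∈ Subtype.val ⁻¹' O' := hgO'
      rwa [hO'K] at this
    exact ⟨⟨g, hgN⟩, h, rfl⟩
  -- Step 3: symmetric open V ⊆ U₁ with V*V*V ⊆ O'
  obtain ⟨V₁, hV₁o, hV₁1, hV₁⟩ := exists_open_nhds_one_mul_subset (hO'o.mem_nhds h1O')
  obtain ⟨V₂, hV₂o, hV₂1, hV₂⟩ := exists_open_nhds_one_mul_subset (hV₁o.mem_nhds hV₁1)
  set V₀ : Set G := V₁ ∩ V₂ ∩ U₁ with hV₀def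
  have hV₀o : IsOpen V₀ := (hV₁o.inter hV₂o).inter hU₁o
  have hV₀1 : (1 : G) ∈ V₀ := ⟨⟨hV₁1, hV₂1⟩, hU₁1⟩
  set V : Set G := V₀ ∩ V₀⁻¹ with hVdef
  have hVo : IsOpen V := hV₀o.inter hV₀o.inv
  have hV1 : (1 : G) ∈ V := ⟨hV₀1, by simpa using hV₀1⟩
  have hVsym : ∀ x ∈ V, x⁻¹ ∈ V := by
    rintro x ⟨hx₀, hxi⟩
    exact ⟨hxi, by simpa using hx₀⟩
  have hVU₁ : V ⊆ U₁ := fun x hx => hx.1.2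
  have hVV₁ : V ⊆ V₁ := fun x hx => hx.1.1.1
  have hVV₂ : V ⊆ V₂ := fun x hx => hx.1.1.2
  have hVVV : ∀ x ∈ V, ∀ y ∈ V, ∀ z ∈ V, x * y * z ∈ O' := by
    intro x hx y hy z hz
    have hxy : x * y ∈ V₁ := hV₂ (Set.mul_mem_mul (hVV₂ hx) (hVV₂ hy))
    exact hV₁ (Set.mul_mem_mul hxy (hVV₁ hz))
  -- Step 4: open subgroup B of G/N inside π(V)
  have hπopen : IsOpenMap ((↑) : G → G ⧸ N) := QuotientGroup.isOpenMap_coe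
  have hπcont : Continuous ((↑) : G → G ⧸ N) := continuous_quotient_mk'
  have hVQ : (((↑) : G → G ⧸ N) '' V) ∈ nhds (1 : G ⧸ N) :=
    (hπopen V hVo).mem_nhds ⟨1, hV1, by simp⟩
  obtain ⟨B, hBo, hBV⟩ := hQ _ hVQ
  set M : Subgroup G := B.comap (QuotientGroup.mk' N) with hMdef
  have hMo : IsOpen (M : Set G) := by
    have h : (M : Set G) = ((↑) : G → G ⧸ N) ⁻¹' (B : Set (G ⧸ N)) := rfl
    rw [h]
    exact hBo.preimage hπcont
  set P : Set G := V ∩ (M : Set G) with hPdef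
  have hPo : IsOpen P := hVo.inter hMo
  have h1P : (1 : G) ∈ P := ⟨hV1, M.one_mem⟩
  have hPsym : ∀ x, x⁻¹ ∈ P → x ∈ P := by
    rintro x ⟨hxV, hxM⟩
    refine ⟨by simpa using hVsym _ hxV, ?_⟩
    have : ((x⁻¹)⁻¹ : G) ∈ M := M.inv_mem hxM
    simpa using this
  set H : Subgroup G := Subgroup.closure P with hHdef
  have hPH : P ⊆ (H : Set G) := Subgroup.subset_closure
  have hHo : IsOpen (H : Set G) :=
    Subgroup.isOpen_of_mem_nhds H (Filter.mem_of_superset (hPo.mem_nhds h1P) hPH)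
  refine ⟨H, hHo, ?_⟩
  -- Main step: every element of H is of the form a * v with a ∈ A₀, v ∈ P
  have absorb : ∀ x : G, (∃ a ∈ (A₀ : Set G), ∃ v ∈ P, x = a * v) → ∀ y ∈ P,
      ∃ a ∈ (A₀ : Set G), ∃ v ∈ P, x * y = a * v := by
    rintro x ⟨a, haA, v, hvP, rfl⟩ y hyP
    have hvM : v ∈ M := hvP.2
    have hyM : y ∈ M := hyP.2
    have hvyM : v * y ∈ M := M.mul_mem hvM hyM
    have hvyB : ((v * y : G) : G ⧸ N) ∈ B := hvyM
    obtain ⟨w, hwV, hw⟩ := hBV hvyB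
    have hwM : w ∈ M := by
      show ((w : G) : G ⧸ N) ∈ B
      rw [hw]
      exact hvyB
    have hwP : w ∈ P := ⟨hwV, hwM⟩
    have hnN : v * y * w⁻¹ ∈ N := by
      rw [← QuotientGroup.eq_one_iff]
      have : ((v * y * w⁻¹ : G) : G ⧸ N) = ((v * y : G) : G ⧸ N) * ((w : G) : G ⧸ N)⁻¹ := by
        simp
      rw [this, ← hw, mul_inv_cancel]
    have hnO' : v * y * w⁻¹ ∈ O' :=
      hVVV v hvP.1 y hyP.1 w⁻¹ (hVsym w hwV)
    have hnA : v * y * w⁻¹ ∈ A₀ := hNO' _ hnN hnO'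
    refine ⟨a * (v * y * w⁻¹), A₀.mul_mem haA hnA, w, hwP, ?_⟩
    group
  have key : ∀ g ∈ H, ∃ a ∈ (A₀ : Set G), ∃ v ∈ P, g = a * v := by
    intro g hg
    have hg' : g ∈ Submonoid.closure (P ∪ P⁻¹) := by
      rw [← Subgroup.closure_toSubmonoid]
      exact hg
    obtain ⟨l, hl, hprod⟩ := Submonoid.exists_list_of_mem_closure hg'
    subst hprod
    clear hg hg'
    induction l using List.reverseRecOn with
    | nil => exact ⟨1, A₀.one_mem, 1, h1P, by simp⟩
    | append_singleton t y ih =>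
      have hyP : y ∈ P := by
        rcases hl y (by simp) with h | h
        · exact h
        · exact hPsym y h
      have ihh := ih (fun z hz => hl z (by simp [hz]))
      rw [List.prod_append, List.prod_singleton]
      exact absorb t.prod ihh y hyP
  intro g hg
  obtain ⟨a, haA, v, hvP, rfl⟩ := key g hg
  exact hU₁U (Set.mul_mem_mul (hA₀U₁ haA) (hVU₁ hvP.1))
end

section
/- A topological group has sufficiently many open subgroups if and only if it admits a weaker Hausdorff group topology that is topologically non-Archimedean. -/
/-- A topological group has sufficiently many open subgroups (SMOG) if the
intersection of all its open subgroups is the trivial subgroup. -/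
def HasSMOG (G : Type*) [Group G] [TopologicalSpace G] : Prop :=
  sInf {H : Subgroup G | IsOpen (H : Set G)} = ⊥

/-- The filter basis of open subgroups. -/
def openSubgroupBasis (G : Type*) [Group G] [TopologicalSpace G] [IsTopologicalGroup G] :
    GroupFilterBasis G where
  sets := {S | ∃ H : Subgroup G, IsOpen (H : Set G) ∧ S = (H : Set G)}
  nonempty := ⟨Set.univ, ⊤, by simp, by simp⟩
  inter_sets := by
    rintro _ _ ⟨H, hH, rfl⟩ ⟨K, hK, rfl⟩
    exact ⟨(H ⊓ K : Subgroup G), ⟨H ⊓ K, hH.inter hK, rfl⟩, by simp⟩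
  one' := by rintro _ ⟨H, hH, rfl⟩; exact H.one_mem
  mul' := by
    rintro _ ⟨H, hH, rfl⟩
    refine ⟨H, ⟨H, hH, rfl⟩, ?_⟩
    rintro x ⟨a, ha, b, hb, rfl⟩
    exact H.mul_mem ha hb
  inv' := by
    rintro _ ⟨H, hH, rfl⟩
    exact ⟨H, ⟨H, hH, rfl⟩, fun x hx => H.inv_mem hx⟩
  conj' := by
    intro x₀ U hU
    obtain ⟨H, hH, rfl⟩ := hU
    refine ⟨(fun x => x₀ * x * x₀⁻¹) ⁻¹' H,
      ⟨H.comap (MulAut.conj x₀).toMonoidHom, ?_, ?_⟩, subset_rfl⟩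
    · exact hH.preimage ((continuous_const.mul continuous_id).mul continuous_const)
    · ext x; simp [Subgroup.mem_comap, MulAut.conj_apply]

theorem SMOG_iff_weaker_TNA_topology (G : Type*) [Group G]
    [τ : TopologicalSpace G] [IsTopologicalGroup G] [T2Space G] :
    HasSMOG G ↔ ∃ τ' : TopologicalSpace G,
      (∀ U : Set G, @IsOpen G τ' U → @IsOpen G τ U) ∧
      @IsTopologicalGroup G τ' _ ∧ @T2Space G τ' ∧ @IsTNA G _ τ' := by
  constructor
  · intro h
    set B := openSubgroupBasis G with hB
    refine ⟨B.topology, ?_, B.isTopologicalGroup, ?_, ?_⟩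
    · -- weaker
      intro U hU
      rw [isOpen_iff_mem_nhds]
      intro x hx
      have hU' := (B.nhds_hasBasis x).mem_iff.1
        ((@isOpen_iff_mem_nhds G B.topology U).1 hU x hx)
      obtain ⟨V, ⟨H, hHopen, rfl⟩, hVU⟩ := hU'
      have himg : IsOpen ((fun y => x * y) '' (H : Set G)) := by
        simpa only [← Set.image_smul, smul_eq_mul] using hHopen.smul x
      refine Filter.mem_of_superset (himg.mem_nhds ?_) hVU
      exact ⟨1, H.one_mem, mul_one x⟩
    · -- T2
      exact @IsTopologicalGroup.t2Space_of_one_sep G B.topology _ B.isTopologicalGroup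
        (fun x hx => by
          have hx' : x ∉ sInf {H : Subgroup G | IsOpen ((H : Set G))} := by
            rw [h]; simpa using hx
          rw [Subgroup.mem_sInf] at hx'
          push_neg at hx'
          obtain ⟨H, hHopen, hxH⟩ := hx'
          exact ⟨H, B.mem_nhds_one ⟨H, hHopen, rfl⟩, hxH⟩)
    · -- TNA
      intro U hU
      rw [B.nhds_one_hasBasis.mem_iff] at hU
      obtain ⟨V, ⟨H, hHopen, rfl⟩, hVU⟩ := hU
      refine ⟨H, ?_, hVU⟩
      exact @Subgroup.isOpen_of_mem_nhds G _ B.topology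
        (by letI := B.topology; infer_instance) H 1 (B.mem_nhds_one ⟨H, hHopen, rfl⟩)
  · rintro ⟨τ', hweak, htg, ht2, htna⟩
    rw [HasSMOG, eq_bot_iff]
    intro x hx
    rw [Subgroup.mem_sInf] at hx
    by_contra hx1
    rw [Subgroup.mem_bot] at hx1
    have hsx : @IsOpen G τ' ({x}ᶜ) := (@isClosed_singleton G τ' (ht2.t1Space) x).isOpen_compl
    have h1 : (1 : G) ∈ ({x}ᶜ : Set G) := by simpa using fun e => hx1 e.symm
    obtain ⟨H, hHopen, hHsub⟩ := htna _ (hsx.mem_nhds h1)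
    exact hHsub (hx H (hweak _ hHopen)) rfl
end

section
/- A metrizable topological group G is topologically non-Archimedean if and only if it admits a compatible right-invariant non-Archimedean metric, i.e., a metric d inducing the topology with d(xg, yg) = d(x,y) for all g and satisfying d(x,y) ≤ max{d(x,z), d(z,y)}. -/
open Classical in
/-- Value function for the ultrametric: `(1/2)^N` where `N` is the first subgroup
in the chain that misses `g`, or `0` if `g` lies in all of them. -/
noncomputable def tnaPhi {G : Type*} [Group G] (K : ℕ → Subgroup G) (g : G) : ℝ :=
  if h : ∃ n, g ∉ K n then (1 / 2 : ℝ) ^ (Nat.find h) else 0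

lemma tnaPhi_nonneg {G : Type*} [Group G] (K : ℕ → Subgroup G) (g : G) :
    0 ≤ tnaPhi K g := by
  unfold tnaPhi
  split_ifs with h
  · positivity
  · exact le_rfl

lemma tnaPhi_lt_iff {G : Type*} [Group G] {K : ℕ → Subgroup G}
    (hanti : ∀ m n : ℕ, m ≤ n → K n ≤ K m) (g : G) (n : ℕ) :
    tnaPhi K g < (1 / 2 : ℝ) ^ n ↔ g ∈ K n := by
  classical
  unfold tnaPhi
  split_ifs with h
  · constructor
    · intro hlt
      by_contra hg
      have hle : Nat.find h ≤ n := Nat.find_le hg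
      have : ((1 : ℝ) / 2) ^ n ≤ (1 / 2) ^ (Nat.find h) :=
        pow_le_pow_of_le_one (by norm_num) (by norm_num) hle
      linarith
    · intro hg
      have hN : g ∉ K (Nat.find h) := Nat.find_spec h
      have hn : n < Nat.find h := by
        by_contra hle
        push_neg at hle
        exact hN (hanti _ _ hle hg)
      exact pow_lt_pow_right_of_lt_one₀ (by norm_num) (by norm_num) hn
  · push_neg at h
    simp [h n]

lemma tnaPhi_eq_zero {G : Type*} [Group G] {K : ℕ → Subgroup G} {g : G}
    (h : tnaPhi K g = 0) (n : ℕ) : g ∈ K n := by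
  classical
  unfold tnaPhi at h
  split_ifs at h with hex
  · exact absurd h (by positivity)
  · push_neg at hex
    exact hex n

lemma tnaPhi_inv {G : Type*} [Group G] (K : ℕ → Subgroup G) (g : G) :
    tnaPhi K g⁻¹ = tnaPhi K g := by
  classical
  have hiff : ∀ n, g⁻¹ ∉ K n ↔ g ∉ K n := fun n => not_congr (K n).inv_mem_iff
  unfold tnaPhi
  by_cases h : ∃ n, g ∉ K n
  · have h' : ∃ n, g⁻¹ ∉ K n := by simpa [hiff] using h
    rw [dif_pos h', dif_pos h]
    congr 1
    exact le_antisymm (Nat.find_min' h' ((hiff _).2 (Nat.find_spec h)))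
      (Nat.find_min' h ((hiff _).1 (Nat.find_spec h')))
  · have h' : ¬ ∃ n, g⁻¹ ∉ K n := by simpa [hiff] using h
    rw [dif_neg h', dif_neg h]

lemma tnaPhi_mul {G : Type*} [Group G] {K : ℕ → Subgroup G}
    (hanti : ∀ m n : ℕ, m ≤ n → K n ≤ K m) (g h : G) :
    tnaPhi K (g * h) ≤ max (tnaPhi K g) (tnaPhi K h) := by
  classical
  by_contra hlt
  push_neg at hlt
  have hpos : 0 < tnaPhi K (g * h) :=
    lt_of_le_of_lt (le_max_of_le_left (tnaPhi_nonneg K g)) hlt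
  have hex : ∃ n, g * h ∉ K n := by
    by_contra hall
    push_neg at hall
    have : tnaPhi K (g * h) = 0 := by unfold tnaPhi; rw [dif_neg (by push_neg; exact hall)]
    linarith
  have hval : tnaPhi K (g * h) = (1 / 2 : ℝ) ^ (Nat.find hex) := by
    unfold tnaPhi; rw [dif_pos hex]
  rw [hval] at hlt
  have hg : g ∈ K (Nat.find hex) :=
    (tnaPhi_lt_iff hanti g _).1 (lt_of_le_of_lt (le_max_left _ _) hlt)
  have hh : h ∈ K (Nat.find hex) :=
    (tnaPhi_lt_iff hanti h _).1 (lt_of_le_of_lt (le_max_right _ _) hlt)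
  exact Nat.find_spec hex (mul_mem hg hh)

lemma tnaPhi_one {G : Type*} [Group G] (K : ℕ → Subgroup G) : tnaPhi K (1 : G) = 0 := by
  classical
  unfold tnaPhi
  rw [dif_neg]
  push_neg
  exact fun n => one_mem _

lemma tna_forward {G : Type*} [Group G] [τ : TopologicalSpace G] [IsTopologicalGroup G]
    [T2Space G] (K : ℕ → Subgroup G)
    (hopen : ∀ n, IsOpen (K n : Set G))
    (hanti : ∀ m n : ℕ, m ≤ n → K n ≤ K m)
    (hbasis : ∀ U ∈ nhds (1 : G), ∃ n, (K n : Set G) ⊆ U) :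
    ∃ m : MetricSpace G,
      m.toUniformSpace.toTopologicalSpace = τ ∧
      (∀ x y g : G, @dist G m.toDist (x * g) (y * g) = @dist G m.toDist x y) ∧
      (∀ x y z : G, @dist G m.toDist x y ≤
        max (@dist G m.toDist x z) (@dist G m.toDist z y)) := by
  classical
  set d : G → G → ℝ := fun x y => tnaPhi K (x * y⁻¹) with hd
  have d_self : ∀ x, d x x = 0 := by
    intro x; simp only [hd, mul_inv_cancel]; exact tnaPhi_one K
  have d_comm : ∀ x y, d x y = d y x := by
    intro x y
    simp only [hd]
    rw [← tnaPhi_inv, mul_inv_rev, inv_inv]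
  have d_ultra : ∀ x y z, d x y ≤ max (d x z) (d z y) := by
    intro x y z
    have h2 : x * z⁻¹ * (z * y⁻¹) = x * y⁻¹ := by group
    simpa only [hd, h2] using tnaPhi_mul hanti (x * z⁻¹) (z * y⁻¹)
  have d_tri : ∀ x y z, d x z ≤ d x y + d y z := by
    intro x y z
    refine le_trans (d_ultra x z y) ?_
    rcases max_cases (d x y) (d y z) with ⟨h, _⟩ | ⟨h, _⟩ <;> rw [h]
    · nlinarith [tnaPhi_nonneg K (y * z⁻¹)]
    · nlinarith [tnaPhi_nonneg K (x * y⁻¹)]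
  have d_eq : ∀ x y, d x y = 0 → x = y := by
    intro x y h
    have hall : ∀ n, x * y⁻¹ ∈ K n := tnaPhi_eq_zero h
    have : x * y⁻¹ = 1 := by
      by_contra hne
      have hopen' : ({x * y⁻¹}ᶜ : Set G) ∈ nhds (1 : G) :=
        (isOpen_compl_singleton).mem_nhds (by simpa using (Ne.symm hne))
      obtain ⟨n, hn⟩ := hbasis _ hopen'
      exact hn (hall n) rfl
    exact mul_inv_eq_one.mp this
  have d_top : ∀ s : Set G, IsOpen s ↔ ∀ x ∈ s, ∃ ε > 0, ∀ y, d x y < ε → y ∈ s := by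
    intro s
    constructor
    · intro hs x hx
      have hx' : (fun g => g * x) ⁻¹' s ∈ nhds (1 : G) := by
        have hc : ContinuousAt (fun g : G => g * x) 1 := (continuous_mul_right x).continuousAt
        have hsx : s ∈ nhds ((1 : G) * x) := by rw [one_mul]; exact hs.mem_nhds hx
        exact hc.preimage_mem_nhds hsx
      obtain ⟨n, hn⟩ := hbasis _ hx'
      refine ⟨(1 / 2 : ℝ) ^ n, by positivity, fun y hy => ?_⟩
      have hmem : x * y⁻¹ ∈ K n := (tnaPhi_lt_iff hanti _ n).1 hy
      have hmem' : y * x⁻¹ ∈ K n := by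
        have := (K n).inv_mem hmem
        rwa [mul_inv_rev, inv_inv] at this
      have := hn hmem'
      simpa [mul_assoc] using this
    · intro hs
      rw [isOpen_iff_mem_nhds]
      intro x hx
      obtain ⟨ε, εpos, hball⟩ := hs x hx
      obtain ⟨n, hn⟩ := exists_pow_lt_of_lt_one εpos (by norm_num : (1 / 2 : ℝ) < 1)
      have himg : IsOpen ((fun g => g * x) '' (K n)) := (isOpenMap_mul_right x) _ (hopen n)
      refine Filter.mem_of_superset (himg.mem_nhds ⟨1, one_mem _, one_mul x⟩) ?_
      rintro _ ⟨g, hg, rfl⟩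
      apply hball
      have hval : d x (g * x) = tnaPhi K g⁻¹ := by
        simp only [hd]
        congr 1
        group
      rw [hval, tnaPhi_inv]
      exact lt_trans ((tnaPhi_lt_iff hanti g n).2 hg) hn
  refine ⟨MetricSpace.ofDistTopology d d_self d_comm d_tri d_top d_eq, rfl, ?_, ?_⟩
  · intro x y g
    show d (x * g) (y * g) = d x y
    simp only [hd]
    congr 1
    group
  · intro x y z
    exact d_ultra x y z

theorem TNA_iff_invariant_ultrametric (G : Type*) [Group G]
    [τ : TopologicalSpace G] [IsTopologicalGroup G] [T2Space G]
    [FirstCountableTopology G] :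
    IsTNA G ↔ ∃ m : MetricSpace G,
      m.toUniformSpace.toTopologicalSpace = τ ∧
      (∀ x y g : G, @dist G m.toDist (x * g) (y * g) = @dist G m.toDist x y) ∧
      (∀ x y z : G, @dist G m.toDist x y ≤
        max (@dist G m.toDist x z) (@dist G m.toDist z y)) := by
  constructor
  · intro hTNA
    obtain ⟨u, hu⟩ := (nhds (1 : G)).exists_antitone_basis
    choose S hSopen hSsub using fun n => hTNA (u n) (hu.mem n)
    let K : ℕ → Subgroup G := fun n => Nat.rec (motive := fun _ => Subgroup G) (S 0) (fun k ih => ih ⊓ S (k + 1)) n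
    have hKsucc : ∀ n, K (n + 1) = K n ⊓ S (n + 1) := fun n => rfl
    have hopen : ∀ n, IsOpen (SetLike.coe (K n)) := by
      intro n
      induction n with
      | zero => exact hSopen 0
      | succ k ih =>
        rw [hKsucc, Subgroup.coe_inf]
        exact ih.inter (hSopen (k + 1))
    have hanti : ∀ m n : ℕ, m ≤ n → K n ≤ K m := by
      have : ∀ n, K (n + 1) ≤ K n := fun n => by rw [hKsucc]; exact inf_le_left
      intro m n h
      exact antitone_nat_of_succ_le this h
    have hKS : ∀ n, K n ≤ S n := by
      intro n
      cases n with
      | zero => exact le_rfl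
      | succ k => rw [hKsucc]; exact inf_le_right
    have hbasis : ∀ U ∈ nhds (1 : G), ∃ n, (SetLike.coe (K n) : Set G) ⊆ U := by
      intro U hU
      obtain ⟨n, -, hn⟩ := hu.toHasBasis.mem_iff.1 hU
      exact ⟨n, fun g hg => hn (hSsub n (hKS n hg))⟩
    exact tna_forward K hopen hanti hbasis
  · rintro ⟨m, hτ, hinv, hultra⟩
    subst hτ
    letI : MetricSpace G := m
    intro U hU
    obtain ⟨ε, εpos, hball⟩ := Metric.mem_nhds_iff.1 hU
    have key : ∀ a b : G, dist (a * b) b = dist a (1 : G) := by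
      intro a b
      have := hinv a 1 b
      rwa [one_mul] at this
    have invkey : ∀ a : G, dist a⁻¹ (1 : G) = dist a 1 := by
      intro a
      have := key a⁻¹ a
      rw [inv_mul_cancel] at this
      rw [← this, dist_comm]
    refine ⟨{ carrier := Metric.ball (1 : G) ε
              one_mem' := Metric.mem_ball_self εpos
              mul_mem' := ?_
              inv_mem' := ?_ }, Metric.isOpen_ball, hball⟩
    · intro a b ha hb
      simp only [Metric.mem_ball] at *
      calc dist (a * b) 1 ≤ max (dist (a * b) b) (dist b 1) := hultra _ _ _
        _ = max (dist a 1) (dist b 1) := by rw [key]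
        _ < ε := max_lt ha hb
    · intro a ha
      simp only [Set.mem_setOf_eq, Metric.mem_ball] at *
      rw [invkey]
      exact ha
end

section
/- The additive group ℚ of rational numbers with its usual topology is topologically Archimedean: it has no proper open subgroup. In particular, ℚ is a separable, metrizable, zero-dimensional topological group that admits no compatible invariant non-Archimedean metric. -/
theorem rat_open_subgroup_top (H : AddSubgroup ℚ) (hH : IsOpen (H : Set ℚ)) : H = ⊤ := by
  rcases Metric.isOpen_iff.1 hH 0 H.zero_mem with ⟨ε, hε, hball⟩
  ext q
  simp only [AddSubgroup.mem_top, iff_true]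
  set n : ℕ := ⌈|(q : ℝ)| / ε⌉₊ + 1 with hn
  have hn0 : 0 < (n : ℝ) := by positivity
  have hqn : q = n • (q / n) := by
    have : (n : ℚ) ≠ 0 := by positivity
    rw [nsmul_eq_mul]
    field_simp
  have hmem : q / n ∈ Metric.ball (0 : ℚ) ε := by
    rw [Metric.mem_ball, Rat.dist_eq, Rat.cast_zero, sub_zero]
    have h1 : ((q / (n : ℚ) : ℚ) : ℝ) = (q : ℝ) / (n : ℝ) := by push_cast; ring
    rw [h1, abs_div, abs_of_pos hn0, div_lt_iff₀ hn0]
    calc |(q : ℝ)| ≤ (|(q : ℝ)| / ε) * ε := by rw [div_mul_cancel₀]; exact hε.ne'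
      _ < n * ε := by
          apply mul_lt_mul_of_pos_right _ hε
          calc (|(q : ℝ)| / ε) ≤ ⌈|(q : ℝ)| / ε⌉₊ := Nat.le_ceil _
            _ < n := by rw [hn]; push_cast; linarith
      _ = ε * n := mul_comm _ _
  rw [hqn]
  exact H.nsmul_mem (hball hmem) n

theorem rat_TA_no_ultrametric :
    (∀ H : AddSubgroup ℚ, IsOpen (H : Set ℚ) → H = ⊤) ∧
    TopologicalSpace.SeparableSpace ℚ ∧
    TopologicalSpace.MetrizableSpace ℚ ∧
    (∃ B : Set (Set ℚ), TopologicalSpace.IsTopologicalBasis B ∧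
      ∀ s ∈ B, IsClopen s) ∧
    ¬ ∃ m : MetricSpace ℚ,
        m.toUniformSpace.toTopologicalSpace = (inferInstance : TopologicalSpace ℚ) ∧
        (∀ x y g : ℚ, @dist ℚ m.toDist (x + g) (y + g) = @dist ℚ m.toDist x y) ∧
        (∀ x y z : ℚ, @dist ℚ m.toDist x y ≤
          max (@dist ℚ m.toDist x z) (@dist ℚ m.toDist z y)) := by
  refine ⟨rat_open_subgroup_top, inferInstance, inferInstance, ?_, ?_⟩
  · -- clopen basis
    refine ⟨{s | ∃ a b : ℝ, Irrational a ∧ Irrational b ∧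
        s = {q : ℚ | a < (q : ℝ) ∧ (q : ℝ) < b}}, ?_, ?_⟩
    · apply TopologicalSpace.isTopologicalBasis_of_isOpen_of_nhds
      · rintro s ⟨a, b, _, _, rfl⟩
        have : IsOpen {x : ℝ | a < x ∧ x < b} := isOpen_Ioo
        exact this.preimage Rat.continuous_coe_real
      · intro q U hq hU
        rcases Metric.isOpen_iff.1 hU q hq with ⟨ε, hε, hball⟩
        obtain ⟨a, ha, ha1, ha2⟩ := exists_irrational_btwn
          (show (q : ℝ) - ε < q by linarith)
        obtain ⟨b, hb, hb1, hb2⟩ := exists_irrational_btwn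
          (show (q : ℝ) < q + ε by linarith)
        refine ⟨_, ⟨a, b, ha, hb, rfl⟩, ⟨ha2, hb1⟩, ?_⟩
        intro r ⟨hr1, hr2⟩
        apply hball
        rw [Metric.mem_ball, Rat.dist_eq, abs_sub_lt_iff]
        constructor <;> linarith
    · rintro s ⟨a, b, ha, hb, rfl⟩
      constructor
      · rw [← isOpen_compl_iff]
        have hset : {q : ℚ | a < (q : ℝ) ∧ (q : ℝ) < b}ᶜ
            = {q : ℚ | (q : ℝ) < a ∨ b < (q : ℝ)} := by
          ext q
          simp only [Set.mem_compl_iff, Set.mem_setOf_eq, not_and_or, not_lt]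
          constructor
          · rintro (h | h)
            · exact Or.inl (h.lt_of_ne fun e => ha ⟨q, e⟩)
            · exact Or.inr (h.lt_of_ne fun e => hb ⟨q, e.symm⟩)
          · rintro (h | h)
            · exact Or.inl h.le
            · exact Or.inr h.le
        rw [hset]
        have : IsOpen {x : ℝ | x < a ∨ b < x} := (isOpen_Iio).union (isOpen_Ioi)
        exact this.preimage Rat.continuous_coe_real
      · have : IsOpen {x : ℝ | a < x ∧ x < b} := isOpen_Ioo
        exact this.preimage Rat.continuous_coe_real
  · -- no invariant ultrametric
    rintro ⟨m, htop, hinv, hultra⟩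
    set d := @dist ℚ m.toDist with hd
    have hcomm : ∀ x y : ℚ, d x y = d y x := fun x y =>
      @dist_comm ℚ m.toPseudoMetricSpace x y
    set ε := d 1 0 with hε
    have hεpos : 0 < ε := @dist_pos ℚ m 1 0 |>.2 one_ne_zero
    have hzero : ∀ x : ℚ, d x x = 0 := fun x => @dist_self ℚ m.toPseudoMetricSpace x
    have key : ∀ x g : ℚ, d (x + g) g = d x 0 := by
      intro x g
      have := hinv x 0 g
      rwa [zero_add] at this
    let H : AddSubgroup ℚ :=
      { carrier := {x | d x 0 < ε}
        zero_mem' := by simp only [Set.mem_setOf_eq, hzero]; exact hεpos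
        add_mem' := by
          intro a b ha hb
          simp only [Set.mem_setOf_eq] at *
          calc d (a + b) 0 ≤ max (d (a + b) b) (d b 0) := hultra _ _ _
            _ = max (d a 0) (d b 0) := by rw [key]
            _ < ε := max_lt ha hb
        neg_mem' := by
          intro a ha
          simp only [Set.mem_setOf_eq] at *
          have : d 0 a = d (-a) 0 := by
            have := hinv (-a) 0 a
            rwa [neg_add_cancel, zero_add] at this
          rw [← this, hcomm]
          exact ha }
    have hopen : IsOpen (H : Set ℚ) := by
      have : (H : Set ℚ) = @Metric.ball ℚ m.toPseudoMetricSpace 0 ε := by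
        ext x; rfl
      rw [this]
      have hb := @Metric.isOpen_ball ℚ m.toPseudoMetricSpace 0 ε
      rw [htop] at hb
      exact hb
    have := rat_open_subgroup_top H hopen
    have h1 : (1 : ℚ) ∈ H := this ▸ AddSubgroup.mem_top 1
    exact absurd h1 (by simp [H, Set.mem_setOf_eq, ← hε, AddSubgroup.mem_mk])
end
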